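/- Let X be a Tychonoff space embedded in βX. If every continuous path α : [0,1] → βX with α(0) ∈ X satisfies α([0,1]) ⊆ X, then for every x₀ ∈ X the inclusion X ↪ βX induces an isomorphism π₁(X, x₀) → π₁(βX, x₀). -/

import Mathlib

open CategoryTheory Topology
open scoped FundamentalGroupoid

attribute [local instance] Path.Homotopic.setoid

section Aux

variable {X : Type} [TopologicalSpace X] [T1Space X] [CompletelyRegularSpace X]

lemma stoneCechUnit_isEmbedding :
    IsEmbedding (stoneCechUnit : X → StoneCech X) := by
  haveI : T35Space X := ⟨⟩
  refine ⟨isInducing_iff_nhds.2 fun x => le_antisymm ?_ ?_, injective_stoneCechUnit_of_t35Space⟩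
  · exact continuous_stoneCechUnit.continuousAt.le_comap
  · intro U hU
    obtain ⟨V, hVU, hVopen, hxV⟩ := mem_nhds_iff.1 hU
    obtain ⟨f, fc, hfx, hfV⟩ := CompletelyRegularSpace.completely_regular x Vᶜ
      hVopen.isClosed_compl (by simpa using hxV)
    have hW : (stoneCechExtend fc) ⁻¹' {y : unitInterval | (y : ℝ) < 1} ∈
        nhds (stoneCechUnit x) := ?_
    · refine Filter.mem_of_superset (Filter.preimage_mem_comap hW) (Set.Subset.trans ?_ hVU)
      intro a ha
      by_contra hav
      have h1 : f a = 1 := hfV hav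
      have h := congrFun (stoneCechExtend_extends fc) a
      rw [Function.comp_apply] at h
      simp only [Set.mem_preimage, Set.mem_setOf_eq, h, h1] at ha
      norm_num at ha
    · refine IsOpen.mem_nhds ?_ ?_
      · exact (isOpen_Iio.preimage continuous_subtype_val).preimage (continuous_stoneCechExtend fc)
      · show ((stoneCechExtend fc) (stoneCechUnit x) : ℝ) < 1
        have h := congrFun (stoneCechExtend_extends fc) x
        rw [Function.comp_apply] at h
        rw [h, hfx]
        norm_num

lemma stoneCech_lift {A : Type*} [TopologicalSpace A] (f : C(A, StoneCech X))
    (hf : ∀ a, f a ∈ Set.range (stoneCechUnit : X → StoneCech X)) :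
    ∃ g : C(A, X), ∀ a, stoneCechUnit (g a) = f a := by
  choose g hg using hf
  refine ⟨⟨g, ?_⟩, hg⟩
  rw [stoneCechUnit_isEmbedding.isInducing.continuous_iff]
  have : (stoneCechUnit : X → StoneCech X) ∘ g = f := funext hg
  rw [this]
  exact f.continuous

end Aux

/-- The homomorphism on fundamental groups induced by a continuous map. -/
noncomputable def inducedFundamentalGroupHom {X Y : Type} [TopologicalSpace X]
    [TopologicalSpace Y] (f : C(X, Y)) (x₀ : X) :
    FundamentalGroup X x₀ →* FundamentalGroup Y (f x₀) :=
  CategoryTheory.Functor.mapEnd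
    (C := FundamentalGroupoid X) (D := FundamentalGroupoid Y)
    (X := FundamentalGroupoid.mk x₀)
    (FundamentalGroupoid.fundamentalGroupoidFunctor.map
      (X := TopCat.of X) (Y := TopCat.of Y) (TopCat.ofHom f))

lemma induced_apply_hom {X Y : Type} [TopologicalSpace X] [TopologicalSpace Y]
    (f : C(X,Y)) (x₀ : X) (a : FundamentalGroup X x₀) :
    (inducedFundamentalGroupHom f x₀ a : Path.Homotopic.Quotient (f x₀) (f x₀)) =
      Path.Homotopic.Quotient.map (x₀ := x₀) (x₁ := x₀) a f := rfl

lemma hom_one {X : Type} [TopologicalSpace X] (x₀ : X) :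
    ((1 : FundamentalGroup X x₀) : Path.Homotopic.Quotient x₀ x₀) = (⟦Path.refl x₀⟧ : Path.Homotopic.Quotient x₀ x₀) := rfl

/-- The automorphism in the fundamental groupoid determined by a homotopy class of loops. -/
noncomputable def autOfQuot {X : Type} [TopologicalSpace X] {x₀ : X}
    (p : Path.Homotopic.Quotient x₀ x₀) : FundamentalGroup X x₀ :=
  (show FundamentalGroupoid.mk x₀ ⟶ FundamentalGroupoid.mk x₀ from p)

lemma autOfQuot_hom {X : Type} [TopologicalSpace X] {x₀ : X}
    (p : Path.Homotopic.Quotient x₀ x₀) : (autOfQuot p : Path.Homotopic.Quotient x₀ x₀) = p := rfl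

lemma eq_of_hom_eq {X : Type} [TopologicalSpace X] {x₀ : X} (a b : FundamentalGroup X x₀)
    (h : (a : Path.Homotopic.Quotient x₀ x₀) = b) : a = b := h

theorem stoneCech_inclusion_induces_pi1_iso
    {X : Type} [TopologicalSpace X] [T1Space X] [CompletelyRegularSpace X]
    (hpath : ∀ α : C(unitInterval, StoneCech X),
      α 0 ∈ Set.range (stoneCechUnit : X → StoneCech X) →
      Set.range α ⊆ Set.range (stoneCechUnit : X → StoneCech X))
    (x₀ : X) :
    Function.Bijective
      (inducedFundamentalGroupHom
        (⟨stoneCechUnit, continuous_stoneCechUnit⟩ : C(X, StoneCech X)) x₀) := by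
  have hinj : Function.Injective (stoneCechUnit : X → StoneCech X) :=
    stoneCechUnit_isEmbedding.injective
  set ι : C(X, StoneCech X) := ⟨stoneCechUnit, continuous_stoneCechUnit⟩ with hι
  constructor
  · rw [injective_iff_map_eq_one]
    intro a ha
    obtain ⟨γ, hγ⟩ := Quotient.exists_rep
      (a : Path.Homotopic.Quotient x₀ x₀)
    have ha' : Path.Homotopic.Quotient.map (x₀ := x₀) (x₁ := x₀) a ι =
        (⟦Path.refl (stoneCechUnit x₀)⟧ :
          Path.Homotopic.Quotient (stoneCechUnit x₀) (stoneCechUnit x₀)) := by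
      rw [← induced_apply_hom, ha, hom_one]
      rfl
    rw [← hγ] at ha'
    have hhtp : (γ.map ι.continuous).Homotopic (Path.refl (stoneCechUnit x₀)) :=
      Quotient.exact ha'
    obtain ⟨H⟩ := hhtp
    -- every point in the image of the homotopy lies in the range of `stoneCechUnit`
    have hrange : ∀ p : unitInterval × unitInterval,
        H.toContinuousMap p ∈ Set.range (stoneCechUnit : X → StoneCech X) := by
      rintro ⟨s, t⟩
      have hcont : Continuous fun t : unitInterval => H (s, t) :=
        H.continuous.comp (by continuity)
      have h0 : (⟨fun t => H (s, t), hcont⟩ : C(unitInterval, StoneCech X)) 0 ∈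
          Set.range (stoneCechUnit : X → StoneCech X) := by
        show H (s, 0) ∈ _
        rw [H.eq_fst s (Set.mem_insert _ _)]
        exact ⟨x₀, by simp [hι]⟩
      exact hpath _ h0 (Set.mem_range_self t)
    obtain ⟨K, hK⟩ := stoneCech_lift H.toContinuousMap hrange
    have hhtpX : γ.Homotopic (Path.refl x₀) := by
      refine ⟨{ toContinuousMap := K, map_zero_left := ?_, map_one_left := ?_, prop' := ?_ }⟩
      · exact fun t => hinj ((hK (0, t)).trans (by simp [hι]))
      · exact fun t => hinj ((hK (1, t)).trans (by simp [hι]))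
      · exact fun s t ht => hinj ((hK (s, t)).trans ((H.eq_fst s ht).trans (by simp [hι])))
    refine eq_of_hom_eq a 1 ?_
    rw [hom_one, ← hγ]
    exact Quotient.sound hhtpX
  · intro b
    obtain ⟨γ, hγ⟩ := Quotient.exists_rep
      (b : Path.Homotopic.Quotient (stoneCechUnit x₀) (stoneCechUnit x₀))
    have hrange : ∀ t, γ.toContinuousMap t ∈ Set.range (stoneCechUnit : X → StoneCech X) := by
      intro t
      exact hpath γ.toContinuousMap (by simp; exact ⟨x₀, rfl⟩) (Set.mem_range_self t)
    obtain ⟨g, hg⟩ := stoneCech_lift γ.toContinuousMap hrange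
    have hg0 : g 0 = x₀ := hinj (by rw [show stoneCechUnit (g 0) = γ 0 from hg _]; simp; rfl)
    have hg1 : g 1 = x₀ := hinj (by rw [show stoneCechUnit (g 1) = γ 1 from hg _]; simp; rfl)
    refine ⟨autOfQuot ⟦(⟨g, hg0, hg1⟩ : Path x₀ x₀)⟧, ?_⟩
    refine eq_of_hom_eq _ b ?_
    show (⟦(⟨g, hg0, hg1⟩ : Path x₀ x₀).map ι.continuous⟧ :
      Path.Homotopic.Quotient (ι x₀) (ι x₀)) = b
    rw [← hγ]
    congr 1
    ext t
    exact hg t
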